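/- arXiv:1108.4270 — 5 statements merged into one kernel-verified Lean document; each statement's English description precedes it below -/
import Mathlib

section
/- For every integer k ≥ 0, every real s ≥ 0, and all real α > 0, β > 0, the marginal model integral satisfies ∫_0^∞ Poi(k|s+b) · Ga(b|α,β) db = ∑_{n=0}^{k} (e^{−s} s^{k−n}/(k−n)!) · (β^α · Γ(α+n) / (n! · Γ(α) · (1+β)^{α+n})); that is, the marginal probability of k counts is the convolution of the Poisson distribution with mean s and the Poisson–Gamma (negative binomial) distribution with parameters α, β. -/
open Real MeasureTheory Set Finset

lemma aux_integrable {a r : ℝ} (ha : 0 < a) (hr : 0 < r) :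
    IntegrableOn (fun t : ℝ => t ^ (a - 1) * Real.exp (-(r * t))) (Set.Ioi 0) := by
  have := integrableOn_rpow_mul_exp_neg_mul_rpow (p := 1) (s := a - 1) (b := r)
    (by linarith) one_pos hr
  simpa [Real.rpow_one] using this

theorem statement4 (k : ℕ) (s : ℝ) (hs : 0 ≤ s) (α β : ℝ) (hα : 0 < α) (hβ : 0 < β) :
    ∫ b in Set.Ioi (0 : ℝ),
        (Real.exp (-(s + b)) * (s + b) ^ k / (k.factorial : ℝ)) *
          (β ^ α / Real.Gamma α * b ^ (α - 1) * Real.exp (-β * b)) =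
      ∑ n ∈ Finset.range (k + 1),
        (Real.exp (-s) * s ^ (k - n) / ((k - n).factorial : ℝ)) *
          (β ^ α * Real.Gamma (α + n) /
            ((n.factorial : ℝ) * Real.Gamma α * (1 + β) ^ (α + n))) := by
  have h1β : (0:ℝ) < 1 + β := by linarith
  set c : ℕ → ℝ := fun n =>
    Real.exp (-s) * s ^ (k - n) * (k.choose n) / (k.factorial : ℝ) * (β ^ α / Real.Gamma α)
    with hc
  have hpt : ∀ b ∈ Set.Ioi (0:ℝ),
      (Real.exp (-(s + b)) * (s + b) ^ k / (k.factorial : ℝ)) *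
        (β ^ α / Real.Gamma α * b ^ (α - 1) * Real.exp (-β * b)) =
      ∑ n ∈ Finset.range (k + 1),
        c n * (b ^ ((α + n) - 1) * Real.exp (-((1 + β) * b))) := by
    intro b hb
    rw [Set.mem_Ioi] at hb
    have hpow : (s + b) ^ k = ∑ n ∈ Finset.range (k + 1),
        b ^ n * s ^ (k - n) * (k.choose n) := by
      rw [add_comm s b, add_pow]
    rw [hpow, Finset.mul_sum, Finset.sum_div, Finset.sum_mul]
    refine Finset.sum_congr rfl fun n _ => ?_
    have hb1 : b ^ ((α + n) - 1) = b ^ (α - 1) * b ^ n := by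
      rw [show (α + n) - 1 = (α - 1) + (n:ℝ) by ring, Real.rpow_add hb,
        Real.rpow_natCast]
    have e1 : Real.exp (-(s + b)) = Real.exp (-s) * Real.exp (-b) := by
      rw [← Real.exp_add]; ring_nf
    have e2 : Real.exp (-((1 + β) * b)) = Real.exp (-b) * Real.exp (-β * b) := by
      rw [← Real.exp_add]; ring_nf
    rw [hb1, e1, e2, hc]
    field_simp
  rw [setIntegral_congr_fun measurableSet_Ioi hpt]
  rw [integral_finset_sum]
  · refine Finset.sum_congr rfl fun n hn => ?_
    rw [Finset.mem_range, Nat.lt_succ_iff] at hn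
    rw [integral_const_mul,
      integral_rpow_mul_exp_neg_mul_Ioi (by positivity : (0:ℝ) < α + n) h1β]
    have hne : ((1 + β) ^ (α + (n:ℝ)) : ℝ) ≠ 0 := (Real.rpow_pos_of_pos h1β _).ne'
    have hinv : ((1:ℝ) / (1 + β)) ^ (α + (n:ℝ)) = ((1 + β) ^ (α + (n:ℝ)))⁻¹ := by
      rw [one_div, Real.inv_rpow h1β.le]
    rw [hinv]
    simp only [hc, Nat.cast_choose ℝ hn]
    have hΓ : Real.Gamma α ≠ 0 := (Real.Gamma_pos_of_pos hα).ne'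
    have hf1 : (n.factorial : ℝ) ≠ 0 := Nat.cast_ne_zero.mpr n.factorial_ne_zero
    have hf2 : ((k - n).factorial : ℝ) ≠ 0 := Nat.cast_ne_zero.mpr (k - n).factorial_ne_zero
    have hf3 : (k.factorial : ℝ) ≠ 0 := Nat.cast_ne_zero.mpr k.factorial_ne_zero
    field_simp
  · intro n _
    exact (Integrable.const_mul (aux_integrable (by positivity) h1β) _)
end

section
/- For every integer k ≥ 0, every real s ≥ 0, and all real α > 0, β > 0, the marginal model integral has the closed form ∫_0^∞ Poi(k|s+b) · Ga(b|α,β) db = (β/(1+β))^α · e^{−s} · f(s;k,α,β). -/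
/-- The polynomial `f(s;k,α,β)`. -/
noncomputable def f (s : ℝ) (k : ℕ) (α β : ℝ) : ℝ :=
  ∑ n ∈ Finset.range (k + 1),
    (Real.Gamma (α + n) / Real.Gamma α) * s ^ (k - n) /
      ((n.factorial : ℝ) * ((k - n).factorial : ℝ) * (1 + β) ^ n)

theorem statement5 (k : ℕ) (s : ℝ) (hs : 0 ≤ s) (α β : ℝ) (hα : 0 < α) (hβ : 0 < β) :
    ∫ b in Set.Ioi (0 : ℝ),
        (Real.exp (-(s + b)) * (s + b) ^ k / (k.factorial : ℝ)) *
          (β ^ α / Real.Gamma α * b ^ (α - 1) * Real.exp (-β * b)) =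
      (β / (1 + β)) ^ α * Real.exp (-s) * f s k α β := by
  have h1β : (0:ℝ) < 1 + β := by linarith
  have hint : ∀ n : ℕ, MeasureTheory.IntegrableOn
      (fun b : ℝ => b ^ (α + n - 1) * Real.exp (-((1 + β) * b))) (Set.Ioi 0) := by
    intro n
    have := integrableOn_rpow_mul_exp_neg_mul_rpow (p := 1) (s := α + n - 1)
      (b := 1 + β) (by have : (0:ℝ) ≤ n := Nat.cast_nonneg n; linarith) zero_lt_one h1β
    refine this.congr_fun (fun x hx => ?_) measurableSet_Ioi
    beta_reduce
    rw [Real.rpow_one, neg_mul]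
  have key : ∫ b in Set.Ioi (0 : ℝ),
        (Real.exp (-(s + b)) * (s + b) ^ k / (k.factorial : ℝ)) *
          (β ^ α / Real.Gamma α * b ^ (α - 1) * Real.exp (-β * b)) =
      ∑ n ∈ Finset.range (k + 1),
        ∫ b in Set.Ioi (0 : ℝ),
          (Real.exp (-s) * (β ^ α / Real.Gamma α) * (k.choose n : ℝ) * s ^ (k - n)
              / (k.factorial : ℝ)) *
            (b ^ (α + n - 1) * Real.exp (-((1 + β) * b))) := by
    rw [← MeasureTheory.integral_finset_sum]
    · refine MeasureTheory.setIntegral_congr_fun measurableSet_Ioi (fun b hb => ?_)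
      have hb0 : (0:ℝ) < b := hb
      have hbin : (s + b) ^ k = ∑ n ∈ Finset.range (k + 1),
          b ^ n * s ^ (k - n) * (k.choose n : ℝ) := by
        rw [add_comm s b, add_pow]
      have hrp : ∀ n : ℕ, b ^ (α + n - 1) = b ^ (α - 1) * b ^ n := by
        intro n
        rw [show α + n - 1 = (α - 1) + (n:ℝ) by ring, Real.rpow_add hb0,
          Real.rpow_natCast]
      have hexp : Real.exp (-(s + b)) * Real.exp (-β * b)
          = Real.exp (-s) * Real.exp (-((1 + β) * b)) := by
        rw [← Real.exp_add, ← Real.exp_add]; ring_nf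
      rw [hbin, Finset.mul_sum, Finset.sum_div, Finset.sum_mul]
      refine Finset.sum_congr rfl (fun n _ => ?_)
      rw [hrp n,
        show Real.exp (-(s + b)) = Real.exp (-s) * Real.exp (-b) by
          rw [← Real.exp_add]; ring_nf,
        show Real.exp (-((1 + β) * b)) = Real.exp (-b) * Real.exp (-β * b) by
          rw [← Real.exp_add]; ring_nf]
      ring
    · intro n _
      exact ((hint n).const_mul _)
  rw [key]
  have hval : ∀ n : ℕ, ∫ b in Set.Ioi (0 : ℝ),
      b ^ (α + n - 1) * Real.exp (-((1 + β) * b))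
      = (1 / (1 + β)) ^ (α + n) * Real.Gamma (α + n) :=
    fun n => Real.integral_rpow_mul_exp_neg_mul_Ioi (by positivity) h1β
  simp_rw [MeasureTheory.integral_const_mul, hval]
  rw [f, Finset.mul_sum]
  refine Finset.sum_congr rfl (fun n hn => ?_)
  have hnk : n ≤ k := Nat.lt_succ_iff.mp (Finset.mem_range.mp hn)
  have hchoose : (k.choose n : ℝ) = (k.factorial : ℝ) /
      ((n.factorial : ℝ) * ((k - n).factorial : ℝ)) := Nat.cast_choose ℝ hnk
  have hpow : (1 / (1 + β)) ^ (α + (n:ℝ)) = (1 / (1 + β)) ^ α * ((1 + β) ^ n)⁻¹ := by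
    rw [Real.rpow_add (by positivity), Real.rpow_natCast, one_div, inv_pow]
  have hA : (β / (1 + β)) ^ α = β ^ α / (1 + β) ^ α := Real.div_rpow hβ.le h1β.le α
  have hB : (1 / (1 + β)) ^ α = 1 / (1 + β) ^ α := by rw [Real.div_rpow zero_le_one h1β.le, Real.one_rpow]
  have hβαne : ((1 + β) ^ α : ℝ) ≠ 0 := (Real.rpow_pos_of_pos h1β α).ne'
  have hΓ : Real.Gamma α ≠ 0 := (Real.Gamma_pos_of_pos hα).ne'
  have hkf : (k.factorial : ℝ) ≠ 0 := Nat.cast_ne_zero.mpr k.factorial_ne_zero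
  have hnf : (n.factorial : ℝ) ≠ 0 := Nat.cast_ne_zero.mpr n.factorial_ne_zero
  have hknf : ((k - n).factorial : ℝ) ≠ 0 := Nat.cast_ne_zero.mpr (k - n).factorial_ne_zero
  have hβn : ((1 + β) ^ n : ℝ) ≠ 0 := by positivity
  rw [hchoose, hpow, hA, hB]
  field_simp
end

section
/- For every integer n ≥ 1, every real s ≥ 0, and all real α > 0, β > 0, the expectation of f^{(n)}/f under the marginal model equals one: ∑_{k=0}^∞ p(k|s) · f^{(n)}(s;k,α,β)/f(s;k,α,β) = 1, where f^{(n)}(s;k,α,β) equals 0 for k < n and f(s;k−n,α,β) for k ≥ n. (Here f(s;k,α,β) > 0 for s ≥ 0, so the ratio is well defined.) -/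
open MeasureTheory Real Set Filter

/-- The marginal model `p(k|s) = (β/(1+β))^α · e^{−s} · f(s;k,α,β)`. -/
noncomputable def p (s : ℝ) (k : ℕ) (α β : ℝ) : ℝ :=
  (β / (1 + β)) ^ α * Real.exp (-s) * f s k α β

lemma gammaTerm_summable {α x : ℝ} (hα : 0 < α) (hx0 : 0 ≤ x) (hx1 : x < 1) :
    Summable (fun m : ℕ => x ^ m / m.factorial * Real.Gamma (α + m)) := by
  set r : ℝ := (1 + x) / 2 with hr
  have hxr : x < r := by rw [hr]; linarith
  have hr1 : r < 1 := by rw [hr]; linarith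
  have hr0 : 0 < r := by rw [hr]; linarith
  apply summable_of_ratio_norm_eventually_le hr1
  filter_upwards [eventually_ge_atTop ⌈x * α / (r - x)⌉₊] with m hm
  have hmge : x * α / (r - x) ≤ (m : ℝ) := le_trans (Nat.le_ceil _) (by exact_mod_cast hm)
  have hmain : x * α + x * m ≤ r * m := by
    have := (div_le_iff₀ (by linarith : (0:ℝ) < r - x)).mp hmge
    nlinarith
  have hΓpos : 0 < Real.Gamma (α + m) := Real.Gamma_pos_of_pos (by positivity)
  have hΓrec : Real.Gamma (α + ((m : ℕ) + 1 : ℕ)) = (α + m) * Real.Gamma (α + m) := by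
    push_cast
    rw [show α + ((m : ℝ) + 1) = (α + m) + 1 by ring, Real.Gamma_add_one (by positivity)]
  have hΓnn : 0 ≤ x ^ m / m.factorial * Real.Gamma (α + m) := by positivity
  have hΓnn' : 0 ≤ x ^ (m + 1) / ((m + 1).factorial : ℝ) * ((α + m) * Real.Gamma (α + m)) := by
    positivity
  rw [hΓrec, Real.norm_of_nonneg hΓnn, Real.norm_of_nonneg hΓnn']
  have hfac : ((m + 1).factorial : ℝ) = ((m : ℝ) + 1) * m.factorial := by
    rw [Nat.factorial_succ]; push_cast; ring
  have hfacpos : (0:ℝ) < m.factorial := by exact_mod_cast m.factorial_pos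
  have key : x * (α + m) ≤ r * ((m : ℝ) + 1) := by nlinarith
  rw [hfac, pow_succ, div_mul_eq_mul_div, div_le_iff₀ (by positivity)]
  calc x ^ m * x * ((α + m) * Real.Gamma (α + m))
      = x ^ m * Real.Gamma (α + m) * (x * (α + m)) := by ring
    _ ≤ x ^ m * Real.Gamma (α + m) * (r * ((m : ℝ) + 1)) := by
        apply mul_le_mul_of_nonneg_left key (by positivity)
    _ = r * (x ^ m / m.factorial * Real.Gamma (α + m)) * (((m : ℝ) + 1) * m.factorial) := by
        field_simp

lemma hasSum_negBinom {α x : ℝ} (hα : 0 < α) (hx0 : 0 ≤ x) (hx1 : x < 1) :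
    HasSum (fun m : ℕ => x ^ m / m.factorial * Real.Gamma (α + m))
      ((1 - x) ^ (-α) * Real.Gamma α) := by
  have h1x : (0:ℝ) < 1 - x := by linarith
  set μ : Measure ℝ := volume.restrict (Ioi 0) with hμ
  set F : ℕ → ℝ → ℝ := fun m t => x ^ m / m.factorial * (Real.exp (-t) * t ^ (α + m - 1))
    with hF
  have hint : ∀ m : ℕ, Integrable (F m) μ := by
    intro m
    exact (Real.GammaIntegral_convergent (by positivity : (0:ℝ) < α + m)).const_mul _
  have hval : ∀ m : ℕ, ∫ t, F m t ∂μ = x ^ m / m.factorial * Real.Gamma (α + m) := by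
    intro m
    simp only [hF]
    rw [integral_const_mul, ← Real.Gamma_eq_integral (by positivity : (0:ℝ) < α + m)]
  have hnorm : ∀ m : ℕ, ∫ t, ‖F m t‖ ∂μ = x ^ m / m.factorial * Real.Gamma (α + m) := by
    intro m
    rw [← hval m]
    apply integral_congr_ae
    rw [hμ]
    filter_upwards [ae_restrict_mem measurableSet_Ioi] with t ht
    have ht0 : (0:ℝ) ≤ t := le_of_lt (Set.mem_Ioi.mp ht)
    have : 0 ≤ F m t := by
      simp only [hF]; positivity
    exact Real.norm_of_nonneg this
  have hsum : Summable fun m => ∫ t, ‖F m t‖ ∂μ := by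
    simp_rw [hnorm]
    exact gammaTerm_summable hα hx0 hx1
  have H := hasSum_integral_of_summable_integral_norm hint hsum
  have e1 : (fun m => ∫ t, F m t ∂μ) = fun m : ℕ => x ^ m / m.factorial * Real.Gamma (α + m) :=
    funext hval
  have e2 : ∫ t, (∑' m, F m t) ∂μ = (1 - x) ^ (-α) * Real.Gamma α := by
    have hptw : ∀ t ∈ Ioi (0:ℝ), (∑' m, F m t) = t ^ (α - 1) * Real.exp (-((1 - x) * t)) := by
      intro t ht
      have ht0 : 0 < t := ht
      have hexp : HasSum (fun m : ℕ => (x * t) ^ m / m.factorial) (Real.exp (x * t)) := by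
        rw [Real.exp_eq_exp_ℝ]
        exact NormedSpace.expSeries_div_hasSum_exp (x * t)
      have h2 := hexp.mul_left (Real.exp (-t) * t ^ (α - 1))
      have h3 : (fun m : ℕ => Real.exp (-t) * t ^ (α - 1) * ((x * t) ^ m / m.factorial))
          = fun m => F m t := by
        funext m
        simp only [hF]
        have : t ^ (α + m - 1) = t ^ (α - 1) * t ^ m := by
          rw [← Real.rpow_natCast t m, ← Real.rpow_add ht0]
          ring_nf
        rw [this, mul_pow]
        ring
      rw [h3] at h2
      rw [h2.tsum_eq,
        show Real.exp (-t) * t ^ (α - 1) * Real.exp (x * t)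
          = t ^ (α - 1) * (Real.exp (-t) * Real.exp (x * t)) by ring,
        ← Real.exp_add]
      congr 1
      ring
    rw [hμ, setIntegral_congr_fun measurableSet_Ioi hptw,
      integral_rpow_mul_exp_neg_mul_Ioi hα h1x]
    rw [one_div, Real.inv_rpow h1x.le, ← Real.rpow_neg h1x.le]
  rw [e1, e2] at H
  exact H

lemma hasSum_a {α x : ℝ} (hα : 0 < α) (hx0 : 0 ≤ x) (hx1 : x < 1) :
    HasSum (fun m : ℕ => Real.Gamma (α + m) / Real.Gamma α * x ^ m / m.factorial)
      ((1 - x) ^ (-α)) := by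
  have hΓ : 0 < Real.Gamma α := Real.Gamma_pos_of_pos hα
  have h3 := (hasSum_negBinom hα hx0 hx1).div_const (Real.Gamma α)
  rw [mul_div_cancel_right₀ _ hΓ.ne'] at h3
  convert h3 using 2 with m
  rfl
  ring

lemma hasSum_f (s : ℝ) (hs : 0 ≤ s) {α β : ℝ} (hα : 0 < α) (hβ : 0 < β) :
    HasSum (fun k => f s k α β) (Real.exp s * (β / (1 + β)) ^ (-α)) := by
  have hβ1 : (0:ℝ) < 1 + β := by linarith
  set x : ℝ := (1 + β)⁻¹ with hx
  have hx0 : 0 ≤ x := by positivity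
  have hx1 : x < 1 := by
    rw [hx, inv_lt_one_iff₀]; right; linarith
  have h1x : (1:ℝ) - x = β / (1 + β) := by
    rw [hx]; field_simp; ring
  set a : ℕ → ℝ := fun m => Real.Gamma (α + m) / Real.Gamma α * x ^ m / m.factorial with ha'
  set b : ℕ → ℝ := fun j => s ^ j / j.factorial with hb'
  have ha : HasSum a ((β / (1 + β)) ^ (-α)) := by
    rw [← h1x]; exact hasSum_a hα hx0 hx1
  have hb : HasSum b (Real.exp s) := by
    rw [Real.exp_eq_exp_ℝ]; exact NormedSpace.expSeries_div_hasSum_exp s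
  have hfa : Summable fun m => ‖a m‖ := by
    apply ha.summable.congr
    intro m
    rw [Real.norm_of_nonneg]
    rw [ha']
    have : 0 ≤ Real.Gamma (α + m) := (Real.Gamma_pos_of_pos (by positivity)).le
    have hΓ : 0 < Real.Gamma α := Real.Gamma_pos_of_pos hα
    positivity
  have hgb : Summable fun j => ‖b j‖ := by
    apply hb.summable.congr
    intro j
    rw [Real.norm_of_nonneg]
    rw [hb']
    positivity
  have hsummable := (summable_norm_sum_mul_range_of_summable_norm hfa hgb).of_norm
  have htsum := tsum_mul_tsum_eq_tsum_sum_range_of_summable_norm hfa hgb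
  rw [ha.tsum_eq, hb.tsum_eq] at htsum
  have H : HasSum (fun k => ∑ i ∈ Finset.range (k + 1), a i * b (k - i))
      (Real.exp s * (β / (1 + β)) ^ (-α)) := by
    have := hsummable.hasSum
    rw [← htsum, mul_comm] at this
    exact this
  convert H using 1
  funext k
  unfold f
  apply Finset.sum_congr rfl
  intro i _
  rw [ha', hb', hx]
  simp only [div_eq_mul_inv, mul_inv, inv_pow]
  ring

theorem statement6 (n : ℕ) (hn : 1 ≤ n) (s : ℝ) (hs : 0 ≤ s) (α β : ℝ)
    (hα : 0 < α) (hβ : 0 < β) :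
    HasSum (fun k : ℕ =>
      p s k α β * ((if k < n then 0 else f s (k - n) α β) / f s k α β)) 1 := by
  have hβ1 : (0:ℝ) < 1 + β := by linarith
  have hq : 0 < β / (1 + β) := div_pos hβ hβ1
  have hfpos : ∀ k, 0 < f s k α β := by
    intro k
    unfold f
    apply Finset.sum_pos'
    · intro i _
      have h1 : 0 ≤ Real.Gamma (α + i) := (Real.Gamma_pos_of_pos (by positivity)).le
      have h2 : 0 < Real.Gamma α := Real.Gamma_pos_of_pos hα
      have h3 : 0 ≤ s ^ (k - i) := pow_nonneg hs _
      positivity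
    · refine ⟨k, Finset.self_mem_range_succ k, ?_⟩
      have h1 : 0 < Real.Gamma (α + k) := Real.Gamma_pos_of_pos (by positivity)
      have h2 : 0 < Real.Gamma α := Real.Gamma_pos_of_pos hα
      rw [Nat.sub_self]
      simp only [pow_zero, Nat.factorial_zero]
      positivity
  have key : ∀ k, p s k α β * ((if k < n then 0 else f s (k - n) α β) / f s k α β)
      = (β / (1 + β)) ^ α * Real.exp (-s) * (if k < n then 0 else f s (k - n) α β) := by
    intro k
    by_cases h : k < n
    · simp [h]
    · simp only [if_neg h]
      rw [p]
      field_simp [(hfpos k).ne']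
  have h1 : HasSum (fun j => (β / (1 + β)) ^ α * Real.exp (-s) * f s j α β) 1 := by
    have h2 := (hasSum_f s hs hα hβ).mul_left ((β / (1 + β)) ^ α * Real.exp (-s))
    have hval : (β / (1 + β)) ^ α * Real.exp (-s) * (Real.exp s * (β / (1 + β)) ^ (-α)) = 1 := by
      rw [Real.rpow_neg hq.le, Real.exp_neg]
      have h4 : (0:ℝ) < (β / (1 + β)) ^ α := Real.rpow_pos_of_pos hq α
      field_simp
    rwa [hval] at h2
  have hinj : Function.Injective (fun j : ℕ => j + n) := add_left_injective n
  have hvanish : ∀ k ∉ Set.range (fun j : ℕ => j + n),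
      (β / (1 + β)) ^ α * Real.exp (-s) * (if k < n then 0 else f s (k - n) α β) = 0 := by
    intro k hk
    have hkn : k < n := by
      by_contra h
      exact hk ⟨k - n, Nat.sub_add_cancel (not_lt.mp h)⟩
    simp [hkn]
  have h2 : HasSum (fun k => (β / (1 + β)) ^ α * Real.exp (-s) *
      (if k < n then 0 else f s (k - n) α β)) 1 := by
    rw [← hinj.hasSum_iff hvanish]
    have hcomp : ((fun k => (β / (1 + β)) ^ α * Real.exp (-s) *
        (if k < n then 0 else f s (k - n) α β)) ∘ fun j : ℕ => j + n)
        = fun j => (β / (1 + β)) ^ α * Real.exp (-s) * f s j α β := by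
      funext j
      simp [Function.comp, Nat.not_lt.mpr (Nat.le_add_left n j), Nat.add_sub_cancel]
    rw [hcomp]
    exact h1
  exact (funext key) ▸ h2
end

section
/- For every real s ≥ 0 and all real α > 0, β > 0, if the series ∑_{n=0}^∞ f(s;n,α,β)^2 / f(s;n+1,α,β) converges, then the negative expectation of the second derivative of the log marginal model equals the expectation of the squared score: −∑_{k=0}^∞ p(k|s) · ( f^{(2)}(s;k,α,β)/f(s;k,α,β) − (f^{(1)}(s;k,α,β)/f(s;k,α,β))^2 ) = (β/(1+β))^α · e^{−s} · ∑_{n=0}^∞ f(s;n,α,β)^2 / f(s;n+1,α,β) − 1, where f^{(m)}(s;k,α,β) equals 0 for k < m and f(s;k−m,α,β) for k ≥ m. -/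
open MeasureTheory Set Topology Filter

lemma binom_summable {α x : ℝ} (hα : 0 < α) (hx0 : 0 < x) (hx1 : x < 1) :
    Summable (fun n : ℕ => Real.Gamma (α + n) / Real.Gamma α * x ^ n / n.factorial) := by
  set a : ℕ → ℝ := fun n => Real.Gamma (α + n) / Real.Gamma α * x ^ n / n.factorial with ha
  have hapos : ∀ n, 0 < a n := by
    intro n
    have h1 : 0 < α + (n : ℝ) := by positivity
    have := Real.Gamma_pos_of_pos h1
    have := Real.Gamma_pos_of_pos hα
    have : (0:ℝ) < n.factorial := by positivity
    positivity
  refine summable_of_ratio_test_tendsto_lt_one hx1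
    (Filter.Eventually.of_forall fun n => (hapos n).ne') ?_
  have hratio : ∀ n : ℕ, ‖a (n + 1)‖ / ‖a n‖ = x * (1 + (α - 1) / (n + 1)) := by
    intro n
    have h1 : 0 < α + (n : ℝ) := by positivity
    have hG : Real.Gamma (α + (n+1 : ℕ)) = (α + n) * Real.Gamma (α + n) := by
      push_cast
      rw [show α + ((n : ℝ) + 1) = (α + n) + 1 by ring, Real.Gamma_add_one h1.ne']
    rw [Real.norm_of_nonneg (hapos _).le, Real.norm_of_nonneg (hapos _).le, ha]
    simp only [hG, Nat.factorial_succ, pow_succ]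
    have hGα := Real.Gamma_pos_of_pos hα
    have hGn := Real.Gamma_pos_of_pos h1
    have hfac : (0:ℝ) < n.factorial := by positivity
    have hn1 : (0:ℝ) < (n:ℝ) + 1 := by positivity
    field_simp
    push_cast
    ring
  rw [show (𝓝 x) = 𝓝 (x * (1 + 0)) by norm_num]
  refine Filter.Tendsto.congr (fun n => (hratio n).symm) ?_
  refine Filter.Tendsto.const_mul x (Filter.Tendsto.const_add 1 ?_)
  have h0 := tendsto_const_div_atTop_nhds_zero_nat (α - 1)
  have := h0.comp (Filter.tendsto_add_atTop_nat 1)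
  refine this.congr fun n => ?_
  simp [Function.comp]

lemma binom_hasSum {α x : ℝ} (hα : 0 < α) (hx0 : 0 < x) (hx1 : x < 1) :
    HasSum (fun n : ℕ => Real.Gamma (α + n) / Real.Gamma α * x ^ n / n.factorial)
      ((1 - x) ^ (-α)) := by
  have hsum := binom_summable hα hx0 hx1
  rw [hsum.hasSum_iff]
  set a : ℕ → ℝ := fun n => Real.Gamma (α + n) / Real.Gamma α * x ^ n / n.factorial with ha
  have hGα := Real.Gamma_pos_of_pos hα
  have hapos : ∀ n, 0 < a n := by
    intro n
    have h1 : 0 < α + (n : ℝ) := by positivity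
    have := Real.Gamma_pos_of_pos h1
    have : (0:ℝ) < n.factorial := by positivity
    positivity
  set μ := volume.restrict (Ioi (0:ℝ)) with hμ
  set g : ℕ → ℝ → ℝ :=
    fun n t => x ^ n / (n.factorial * Real.Gamma α) * (Real.exp (-t) * t ^ (α + n - 1)) with hg
  have hint : ∀ n, Integrable (g n) μ := by
    intro n
    have h1 : 0 < α + (n : ℝ) := by positivity
    exact (Real.GammaIntegral_convergent h1).const_mul _
  have hval : ∀ n, ∫ t, g n t ∂μ = a n := by
    intro n
    have h1 : 0 < α + (n : ℝ) := by positivity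
    rw [hg]
    simp only
    rw [MeasureTheory.integral_const_mul, ← Real.Gamma_eq_integral h1, ha]
    have hfac : (0:ℝ) < n.factorial := by positivity
    field_simp
  have hnn : ∀ n, ∀ᵐ t ∂μ, 0 ≤ g n t := by
    intro n
    rw [hμ, ae_restrict_iff' measurableSet_Ioi]
    refine Filter.Eventually.of_forall fun t ht => ?_
    have ht0 : 0 < t := ht
    have : (0:ℝ) ≤ t ^ (α + n - 1) := (Real.rpow_pos_of_pos ht0 _).le
    positivity
  have hlint : ∀ n, ∫⁻ t, ‖g n t‖₊ ∂μ = ENNReal.ofReal (a n) := by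
    intro n
    rw [show ∫⁻ t, ‖g n t‖₊ ∂μ = ∫⁻ t, ENNReal.ofReal (g n t) ∂μ from
      lintegral_congr_ae ((hnn n).mono fun t ht => Real.enorm_eq_ofReal ht),
      ← ofReal_integral_eq_lintegral_ofReal (hint n) (hnn n), hval n]
  have hlfin : ∑' n, ∫⁻ t, ‖g n t‖₊ ∂μ ≠ ⊤ := by
    simp_rw [hlint]
    rw [← ENNReal.ofReal_tsum_of_nonneg (fun n => (hapos n).le) hsum]
    exact ENNReal.ofReal_ne_top
  have interchange := integral_tsum (fun n => (hint n).aestronglyMeasurable) hlfin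
  have hpt : ∀ t ∈ Ioi (0:ℝ), (∑' n, g n t)
      = (Real.Gamma α)⁻¹ * (t ^ (α - 1) * Real.exp (-((1 - x) * t))) := by
    intro t ht
    have ht0 : 0 < t := ht
    have hsplit : ∀ n : ℕ, g n t
        = (Real.Gamma α)⁻¹ * (Real.exp (-t) * t ^ (α - 1)) * ((x * t) ^ n / n.factorial) := by
      intro n
      rw [hg]
      simp only
      rw [show α + (n:ℕ) - 1 = (α - 1) + (n:ℕ) by ring,
        Real.rpow_add ht0, Real.rpow_natCast]
      have hfac : (0:ℝ) < n.factorial := by positivity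
      field_simp
      ring
    rw [tsum_congr hsplit, tsum_mul_left]
    have hexp : (∑' n : ℕ, (x * t) ^ n / n.factorial) = Real.exp (x * t) := by
      rw [Real.exp_eq_exp_ℝ, NormedSpace.exp_eq_tsum_div]
    rw [hexp, show -((1 - x) * t) = -t + x * t by ring, Real.exp_add]
    ring
  have hfinal : ∫ t, (∑' n, g n t) ∂μ = (1 - x) ^ (-α) := by
    rw [hμ, setIntegral_congr_fun measurableSet_Ioi hpt]
    rw [MeasureTheory.integral_const_mul,
      Real.integral_rpow_mul_exp_neg_mul_Ioi hα (by linarith : 0 < 1 - x)]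
    rw [one_div, Real.inv_rpow (by linarith : (0:ℝ) ≤ 1 - x),
      ← Real.rpow_neg (by linarith : (0:ℝ) ≤ 1 - x)]
    field_simp
  rw [← tsum_congr hval, ← interchange, hfinal]

lemma f_pos {s : ℝ} (hs : 0 ≤ s) {α β : ℝ} (hα : 0 < α) (hβ : 0 < β) (k : ℕ) :
    0 < f s k α β := by
  have hGα := Real.Gamma_pos_of_pos hα
  refine Finset.sum_pos' (fun n _ => ?_) ⟨k, Finset.self_mem_range_succ k, ?_⟩
  · have h1 : 0 < α + (n : ℝ) := by positivity
    have := Real.Gamma_pos_of_pos h1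
    have h2 : (0:ℝ) < n.factorial := by positivity
    have h3 : (0:ℝ) < (k - n).factorial := by positivity
    have h4 : (0:ℝ) ≤ s ^ (k - n) := by positivity
    positivity
  · have h1 : 0 < α + (k : ℝ) := by positivity
    have := Real.Gamma_pos_of_pos h1
    have h2 : (0:ℝ) < k.factorial := by positivity
    simp only [Nat.sub_self, pow_zero, Nat.factorial_zero]
    positivity

lemma f_hasSum {s : ℝ} (hs : 0 ≤ s) {α β : ℝ} (hα : 0 < α) (hβ : 0 < β) :
    HasSum (fun k : ℕ => f s k α β) ((β / (1 + β)) ^ (-α) * Real.exp s) := by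
  have h1β : (0:ℝ) < 1 + β := by linarith
  set x : ℝ := (1 + β)⁻¹ with hx
  have hx0 : 0 < x := by positivity
  have hx1 : x < 1 := by
    rw [hx, inv_lt_one_iff₀]; right; linarith
  have h1mx : 1 - x = β / (1 + β) := by
    rw [hx]; field_simp; ring
  set a : ℕ → ℝ := fun n => Real.Gamma (α + n) / Real.Gamma α * x ^ n / n.factorial with ha
  set b : ℕ → ℝ := fun m => s ^ m / m.factorial with hb
  have hGα := Real.Gamma_pos_of_pos hα
  have hapos : ∀ n, 0 < a n := by
    intro n
    have h1 : 0 < α + (n : ℝ) := by positivity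
    have := Real.Gamma_pos_of_pos h1
    have : (0:ℝ) < n.factorial := by positivity
    positivity
  have hbnn : ∀ n, 0 ≤ b n := by
    intro n
    have : (0:ℝ) < n.factorial := by positivity
    have : (0:ℝ) ≤ s ^ n := by positivity
    rw [hb]; positivity
  have hA : HasSum a ((1 - x) ^ (-α)) := binom_hasSum hα hx0 hx1
  have hB : Summable b := Real.summable_pow_div_factorial s
  have hBval : (∑' m, b m) = Real.exp s := by
    rw [hb, Real.exp_eq_exp_ℝ, NormedSpace.exp_eq_tsum_div]
  have hAn : Summable fun n => ‖a n‖ :=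
    hA.summable.congr fun n => (Real.norm_of_nonneg (hapos n).le).symm
  have hBn : Summable fun n => ‖b n‖ :=
    hB.congr fun n => (Real.norm_of_nonneg (hbnn n)).symm
  have hfk : ∀ k : ℕ, f s k α β = ∑ n ∈ Finset.range (k + 1), a n * b (k - n) := by
    intro k
    refine Finset.sum_congr rfl fun n _ => ?_
    rw [ha, hb, hx]
    simp only
    rw [inv_pow]
    have h1 : 0 < α + (n : ℝ) := by positivity
    have h2 : (0:ℝ) < n.factorial := by positivity
    have h3 : (0:ℝ) < (k - n).factorial := by positivity
    have h4 : (0:ℝ) < (1 + β) ^ n := by positivity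
    field_simp
  have hsumF : Summable fun k => f s k α β := by
    refine ((summable_norm_sum_mul_range_of_summable_norm hAn hBn).of_norm).congr fun k => ?_
    exact (hfk k).symm
  rw [hsumF.hasSum_iff]
  calc (∑' k, f s k α β) = ∑' k, ∑ n ∈ Finset.range (k + 1), a n * b (k - n) :=
        tsum_congr hfk
    _ = (∑' n, a n) * (∑' m, b m) :=
        (tsum_mul_tsum_eq_tsum_sum_range_of_summable_norm hAn hBn).symm
    _ = (β / (1 + β)) ^ (-α) * Real.exp s := by rw [hA.tsum_eq, hBval, h1mx]

theorem statement9 (s : ℝ) (hs : 0 ≤ s) (α β : ℝ) (hα : 0 < α) (hβ : 0 < β)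
    (hsum : Summable fun n : ℕ => f s n α β ^ 2 / f s (n + 1) α β) :
    -∑' k : ℕ, p s k α β *
        ((if k < 2 then 0 else f s (k - 2) α β) / f s k α β -
          ((if k < 1 then 0 else f s (k - 1) α β) / f s k α β) ^ 2) =
      (β / (1 + β)) ^ α * Real.exp (-s) *
        (∑' n : ℕ, f s n α β ^ 2 / f s (n + 1) α β) - 1 := by
  have h1β : (0:ℝ) < 1 + β := by linarith
  have hq : (0:ℝ) < β / (1 + β) := by positivity
  set C : ℝ := (β / (1 + β)) ^ α * Real.exp (-s) with hC
  have hCpos : 0 < C := by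
    have := Real.rpow_pos_of_pos hq α
    positivity
  have hfpos := fun k => f_pos hs hα hβ (k := k)
  have hF := f_hasSum hs hα hβ
  -- normalization : C * ∑ f = 1
  have hnorm : C * (∑' k, f s k α β) = 1 := by
    have hne := (Real.rpow_pos_of_pos hq α).ne'
    have h2 : Real.exp (-s) * Real.exp s = 1 := by
      rw [← Real.exp_add, neg_add_cancel, Real.exp_zero]
    rw [hF.tsum_eq, hC, Real.rpow_neg hq.le,
      show (β / (1 + β)) ^ α * Real.exp (-s) * (((β / (1 + β)) ^ α)⁻¹ * Real.exp s)
        = ((β / (1 + β)) ^ α * ((β / (1 + β)) ^ α)⁻¹) * (Real.exp (-s) * Real.exp s) by ring,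
      mul_inv_cancel₀ hne, h2, one_mul]
  set A : ℕ → ℝ := fun k => if k < 1 then 0 else C * f s (k - 1) α β ^ 2 / f s k α β with hA
  set B : ℕ → ℝ := fun k => if k < 2 then 0 else C * f s (k - 2) α β with hB
  have hterm : ∀ k : ℕ, p s k α β *
        ((if k < 2 then 0 else f s (k - 2) α β) / f s k α β -
          ((if k < 1 then 0 else f s (k - 1) α β) / f s k α β) ^ 2) = B k - A k := by
    intro k
    have hfk := (hfpos k).ne'
    rw [hA, hB, p, ← hC]
    simp only
    by_cases h2 : k < 2
    · have h1 : k < 1 ∨ ¬ k < 1 := em _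
      rcases h1 with h1 | h1
      · simp only [if_pos h2, if_pos h1]
        ring
      · simp only [if_pos h2, if_neg h1]
        field_simp
        ring
    · have h1 : ¬ k < 1 := by omega
      simp only [if_neg h2, if_neg h1]
      field_simp
  -- summabilities
  have hsumA : Summable A := by
    rw [← summable_nat_add_iff 1]
    refine (hsum.mul_left C).congr fun n => ?_
    rw [hA]
    simp only [Nat.add_sub_cancel, if_neg (by omega : ¬ n + 1 < 1)]
    ring
  have hsumB : Summable B := by
    rw [← summable_nat_add_iff 2]
    refine (hF.summable.mul_left C).congr fun n => ?_
    rw [hB]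
    simp only [Nat.add_sub_cancel, if_neg (by omega : ¬ n + 2 < 2)]
  have htsumA : ∑' k, A k = C * ∑' n, f s n α β ^ 2 / f s (n + 1) α β := by
    rw [Summable.tsum_eq_zero_add hsumA]
    have h0 : A 0 = 0 := by rw [hA]; simp
    rw [h0, zero_add, ← tsum_mul_left]
    refine tsum_congr fun n => ?_
    rw [hA]
    simp only [Nat.add_sub_cancel, if_neg (by omega : ¬ n + 1 < 1)]
    ring
  have htsumB : ∑' k, B k = 1 := by
    rw [Summable.tsum_eq_zero_add hsumB]
    have hsumB1 : Summable fun k => B (k + 1) := by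
      rw [summable_nat_add_iff 1]; exact hsumB
    rw [Summable.tsum_eq_zero_add hsumB1]
    have h0 : B 0 = 0 := by rw [hB]; simp
    have h1 : B 1 = 0 := by rw [hB]; simp
    rw [h0, h1, zero_add, zero_add, ← hnorm, ← tsum_mul_left]
    refine tsum_congr fun n => ?_
    rw [hB]
    simp only [show n + 1 + 1 - 2 = n by omega, if_neg (by omega : ¬ n + 1 + 1 < 2)]
  calc -∑' k : ℕ, p s k α β *
        ((if k < 2 then 0 else f s (k - 2) α β) / f s k α β -
          ((if k < 1 then 0 else f s (k - 1) α β) / f s k α β) ^ 2)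
      = -∑' k, (B k - A k) := by rw [tsum_congr hterm]
    _ = -((∑' k, B k) - ∑' k, A k) := by rw [Summable.tsum_sub hsumB hsumA]
    _ = (∑' k, A k) - ∑' k, B k := by ring
    _ = C * (∑' n, f s n α β ^ 2 / f s (n + 1) α β) - 1 := by rw [htsumA, htsumB]
    _ = (β / (1 + β)) ^ α * Real.exp (-s) *
        (∑' n : ℕ, f s n α β ^ 2 / f s (n + 1) α β) - 1 := by rw [hC]
end

section
/- For every real s ≥ 0, every real b₀ > 0, and every integer k ≥ 0, the function α ↦ f(s;k,α,α/b₀) tends to (s+b₀)^k / k! as the real parameter α tends to infinity; that is, in the limit in which the Gamma background prior with shape α and rate β = α/b₀ degenerates to a point mass at b₀, the polynomial f(s;k,α,β) converges to the Poisson kernel (s+b₀)^k/k!. -/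
lemma gamma_ratio_aux (n : ℕ) : ∀ {α : ℝ}, 0 < α →
    Real.Gamma (α + n) = (∏ i ∈ Finset.range n, (α + i)) * Real.Gamma α := by
  induction n with
  | zero => intro α hα; simp
  | succ m ih =>
    intro α hα
    have h : α + ((m : ℕ) + 1 : ℕ) = (α + m) + 1 := by push_cast; ring
    rw [h, Real.Gamma_add_one (by positivity), Finset.prod_range_succ, ih hα]
    push_cast
    ring

lemma tendsto_ratio (b₀ : ℝ) (hb₀ : 0 < b₀) (c : ℝ) :
    Filter.Tendsto (fun α : ℝ => (α + c) / (α + b₀)) Filter.atTop (nhds 1) := by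
  have h0 : Filter.Tendsto (fun α : ℝ => (c - b₀) / (α + b₀)) Filter.atTop (nhds 0) :=
    Filter.Tendsto.div_atTop tendsto_const_nhds
      (Filter.tendsto_atTop_add_const_right _ b₀ Filter.tendsto_id)
  have h1 : Filter.Tendsto (fun α : ℝ => 1 + (c - b₀) / (α + b₀)) Filter.atTop (nhds 1) := by
    simpa using (tendsto_const_nhds.add h0)
  refine h1.congr' ?_
  filter_upwards [Filter.eventually_gt_atTop 0] with α hα
  have hne : α + b₀ ≠ 0 := by positivity
  field_simp
  ring

theorem statement15 (s : ℝ) (hs : 0 ≤ s) (b₀ : ℝ) (hb₀ : 0 < b₀) (k : ℕ) :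
    Filter.Tendsto (fun α : ℝ => f s k α (α / b₀)) Filter.atTop
      (nhds ((s + b₀) ^ k / (k.factorial : ℝ))) := by
  have hsum : ∑ n ∈ Finset.range (k + 1),
      b₀ ^ n * s ^ (k - n) / ((n.factorial : ℝ) * ((k - n).factorial : ℝ))
      = (s + b₀) ^ k / (k.factorial : ℝ) := by
    rw [add_comm s b₀, add_pow, Finset.sum_div]
    refine Finset.sum_congr rfl fun n hn => ?_
    have hn' : n ≤ k := Nat.lt_succ_iff.mp (Finset.mem_range.mp hn)
    have hc : ((k.choose n : ℝ)) * (n.factorial : ℝ) * ((k - n).factorial : ℝ)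
        = (k.factorial : ℝ) := by
      exact_mod_cast Nat.choose_mul_factorial_mul_factorial hn'
    have h1 : (n.factorial : ℝ) ≠ 0 := by positivity
    have h2 : ((k - n).factorial : ℝ) ≠ 0 := by positivity
    have h3 : (k.factorial : ℝ) ≠ 0 := by positivity
    field_simp
    rw [← hc]; ring
  rw [← hsum]
  have key : ∀ n ∈ Finset.range (k + 1),
      Filter.Tendsto (fun α : ℝ => (Real.Gamma (α + n) / Real.Gamma α) * s ^ (k - n) /
        ((n.factorial : ℝ) * ((k - n).factorial : ℝ) * (1 + α / b₀) ^ n)) Filter.atTop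
        (nhds (b₀ ^ n * s ^ (k - n) / ((n.factorial : ℝ) * ((k - n).factorial : ℝ)))) := by
    intro n _
    have hprod : Filter.Tendsto (fun α : ℝ => ∏ i ∈ Finset.range n,
        (b₀ * ((α + i) / (α + b₀)))) Filter.atTop (nhds (b₀ ^ n)) := by
      have := tendsto_finset_prod (Finset.range n)
        (fun i _ => (tendsto_const_nhds.mul (tendsto_ratio b₀ hb₀ (i : ℝ)) :
          Filter.Tendsto (fun α : ℝ => b₀ * ((α + i) / (α + b₀))) Filter.atTop (nhds (b₀ * 1))))
      simpa using this
    have hlim : Filter.Tendsto (fun α : ℝ => (∏ i ∈ Finset.range n,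
        (b₀ * ((α + i) / (α + b₀)))) * (s ^ (k - n) / ((n.factorial : ℝ) * ((k - n).factorial : ℝ))))
        Filter.atTop
        (nhds (b₀ ^ n * (s ^ (k - n) / ((n.factorial : ℝ) * ((k - n).factorial : ℝ))))) :=
      hprod.mul tendsto_const_nhds
    have heq : (fun α : ℝ => (∏ i ∈ Finset.range n,
        (b₀ * ((α + i) / (α + b₀)))) * (s ^ (k - n) / ((n.factorial : ℝ) * ((k - n).factorial : ℝ))))
        =ᶠ[Filter.atTop] fun α : ℝ => (Real.Gamma (α + n) / Real.Gamma α) * s ^ (k - n) /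
        ((n.factorial : ℝ) * ((k - n).factorial : ℝ) * (1 + α / b₀) ^ n) := by
      filter_upwards [Filter.eventually_gt_atTop 0] with α hα
      have hg : Real.Gamma α ≠ 0 := (Real.Gamma_pos_of_pos hα).ne'
      have hab : (0:ℝ) < α + b₀ := by positivity
      have hb : (1 : ℝ) + α / b₀ = (α + b₀) / b₀ := by field_simp; ring
      have hp : ∏ i ∈ Finset.range n, (b₀ * ((α + i) / (α + b₀)))
          = (∏ i ∈ Finset.range n, (α + i)) * b₀ ^ n / (α + b₀) ^ n := by
        rw [Finset.prod_mul_distrib, Finset.prod_const, Finset.prod_div_distrib,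
          Finset.prod_const, Finset.card_range]
        ring
      have h1 : (n.factorial : ℝ) ≠ 0 := by positivity
      have h2 : ((k - n).factorial : ℝ) ≠ 0 := by positivity
      rw [hp, gamma_ratio_aux n hα, hb]
      have hab' : (α + b₀) ^ n ≠ 0 := pow_ne_zero _ hab.ne'
      rw [div_pow]
      field_simp
    have hfinal : b₀ ^ n * (s ^ (k - n) / ((n.factorial : ℝ) * ((k - n).factorial : ℝ)))
        = b₀ ^ n * s ^ (k - n) / ((n.factorial : ℝ) * ((k - n).factorial : ℝ)) := by ring
    rw [← hfinal]
    exact hlim.congr' heq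
  have hmain := tendsto_finset_sum (Finset.range (k + 1)) key
  simp only [f]
  exact hmain
end
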